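/- arXiv:2308.16365 — 2 statements merged into one kernel-verified Lean document; each statement's English description precedes it below -/
import Mathlib

section
/- Let n ≥ 5 and let c be a (5,8)-coloring of K_n with no monochromatic triangle. If X is a maximal monochromatic component isomorphic to K_{1,3} and Y ≠ X is a maximal monochromatic component isomorphic to P_3, P_4, or K_{1,3}, then X and Y share at most one vertex. -/
open SimpleGraph

/-- The color class of color `i` in the edge-coloring `c` of the complete graph on `Fin n`:
the spanning subgraph consisting of the edges of color `i`. -/
def colorClass {n : ℕ} {α : Type*} (c : Sym2 (Fin n) → α) (i : α) :
    SimpleGraph (Fin n) where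
  Adj x y := x ≠ y ∧ c s(x, y) = i
  symm := by
    constructor
    rintro x y ⟨hxy, hc⟩
    refine ⟨hxy.symm, ?_⟩
    rwa [Sym2.eq_swap]
  loopless := by
    constructor
    rintro x ⟨hxx, -⟩
    exact hxx rfl

/-- `c` is a `(p,q)`-coloring of the complete graph on `Fin n`: every set of `p` vertices
spans edges receiving at least `q` distinct colors. -/
def IsPQColoring {n : ℕ} {α : Type*} (p q : ℕ) (c : Sym2 (Fin n) → α) : Prop :=
  ∀ S : Finset (Fin n), S.card = p →
    q ≤ {j : α | ∃ x ∈ S, ∃ y ∈ S, x ≠ y ∧ c s(x, y) = j}.ncard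

/-- `f(n,p,q)`: the minimum number of colors in a `(p,q)`-coloring of `K_n`. -/
noncomputable def fpq (n p q : ℕ) : ℕ :=
  sInf {m : ℕ | ∃ c : Sym2 (Fin n) → Fin m, IsPQColoring p q c}

/-- The coloring `c` has a monochromatic triangle. -/
def HasMonoTriangle {n : ℕ} {α : Type*} (c : Sym2 (Fin n) → α) : Prop :=
  ∃ x y z : Fin n, x ≠ y ∧ y ≠ z ∧ x ≠ z ∧
    c s(x, y) = c s(y, z) ∧ c s(y, z) = c s(x, z)

/-- The connected component `K` of `G` (as an induced subgraph) is isomorphic to `H`. -/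
def ComponentIso {V : Type*} (G : SimpleGraph V) (K : G.ConnectedComponent)
    {W : Type*} (H : SimpleGraph W) : Prop :=
  Nonempty (G.induce K.supp ≃g H)

/-- The connected component `K` of `G` contains at least one edge. -/
def CompHasEdge {V : Type*} (G : SimpleGraph V) (K : G.ConnectedComponent) : Prop :=
  ∃ u v : V, u ∈ K.supp ∧ G.Adj u v

/-- The set of monochromatic components (pairs of a color and a connected component of its
color class) isomorphic to `H`. -/
def compsIso {n : ℕ} {α : Type*} (c : Sym2 (Fin n) → α) {W : Type*} (H : SimpleGraph W) :
    Set (Σ i : α, (colorClass c i).ConnectedComponent) :=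
  {X | ComponentIso (colorClass c X.1) X.2 H}

/-- The star `K_{1,3}`. -/
def starK13 : SimpleGraph (Fin 1 ⊕ Fin 3) := completeBipartiteGraph (Fin 1) (Fin 3)

/-- `A`: maximal monochromatic components isomorphic to `K_2`. -/
def setA {n : ℕ} {α : Type*} (c : Sym2 (Fin n) → α) :
    Set (Σ i : α, (colorClass c i).ConnectedComponent) := compsIso c (pathGraph 2)

/-- `B`: maximal monochromatic components isomorphic to `P_3` (path with 2 edges). -/
def setB {n : ℕ} {α : Type*} (c : Sym2 (Fin n) → α) :
    Set (Σ i : α, (colorClass c i).ConnectedComponent) := compsIso c (pathGraph 3)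

/-- `C`: maximal monochromatic components isomorphic to `P_4` (path with 3 edges). -/
def setC {n : ℕ} {α : Type*} (c : Sym2 (Fin n) → α) :
    Set (Σ i : α, (colorClass c i).ConnectedComponent) := compsIso c (pathGraph 4)

/-- `D`: maximal monochromatic components isomorphic to `K_{1,3}`. -/
def setD {n : ℕ} {α : Type*} (c : Sym2 (Fin n) → α) :
    Set (Σ i : α, (colorClass c i).ConnectedComponent) := compsIso c starK13

/-- `B_1`: components in `B` sharing at most one vertex with every other component of `B`. -/
def setB1 {n : ℕ} {α : Type*} (c : Sym2 (Fin n) → α) :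
    Set (Σ i : α, (colorClass c i).ConnectedComponent) :=
  {X ∈ setB c | ∀ Y ∈ setB c, Y ≠ X → (X.2.supp ∩ Y.2.supp).ncard ≤ 1}

/-- `B_2 = B \ B_1`. -/
def setB2 {n : ℕ} {α : Type*} (c : Sym2 (Fin n) → α) :
    Set (Σ i : α, (colorClass c i).ConnectedComponent) := setB c \ setB1 c

/-- A monochromatic 2-edge path (for a total coloring). -/
def MonoPath2 {n : ℕ} {α : Type*} (c : Sym2 (Fin n) → α) (x y z : Fin n) : Prop :=
  x ≠ y ∧ y ≠ z ∧ x ≠ z ∧ c s(x, y) = c s(y, z)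

/-- The three values `a`, `b`, `c` take exactly two distinct values. -/
def ExactlyTwo {α : Type*} (a b c : α) : Prop :=
  (a = b ∧ a ≠ c) ∨ (b = c ∧ a ≠ b) ∨ (a = c ∧ a ≠ b)

/-- A 2-edge path `x-y-z` with both edges of color `i`, with respect to the
edge-color relation `col`. -/
def PathCol {n : ℕ} {α : Type*} (col : Sym2 (Fin n) → α → Prop) (i : α)
    (x y z : Fin n) : Prop :=
  x ≠ y ∧ y ≠ z ∧ x ≠ z ∧ col s(x, y) i ∧ col s(y, z) i

/-- A 2-edge matching `{xy, uv}` with both edges of color `i`, with respect to the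
edge-color relation `col`. -/
def MatchCol {n : ℕ} {α : Type*} (col : Sym2 (Fin n) → α → Prop) (i : α)
    (x y u v : Fin n) : Prop :=
  x ≠ y ∧ u ≠ v ∧ x ≠ u ∧ x ≠ v ∧ y ≠ u ∧ y ≠ v ∧ col s(x, y) i ∧ col s(u, v) i

/-- The colored edge set `E` contains a triangle whose three edges receive exactly
two distinct colors. -/
def TwoColTriIn {n : ℕ} {α : Type*} (E : Set (Sym2 (Fin n) × α)) : Prop :=
  ∃ (x y z : Fin n) (c₁ c₂ c₃ : α), x ≠ y ∧ y ≠ z ∧ x ≠ z ∧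
    (s(x, y), c₁) ∈ E ∧ (s(y, z), c₂) ∈ E ∧ (s(x, z), c₃) ∈ E ∧
    ExactlyTwo c₁ c₂ c₃

/-- Bad subgraph of type (a): an alternating 4-cycle formed by two monochromatic
2-edge matchings of distinct colors, with all vertices in `S`. -/
def TypeA {n : ℕ} {α : Type*} (col : Sym2 (Fin n) → α → Prop) (S : Finset (Fin n)) : Prop :=
  ∃ (w x y z : Fin n) (i ℓ : α), w ∈ S ∧ x ∈ S ∧ y ∈ S ∧ z ∈ S ∧ i ≠ ℓ ∧
    MatchCol col i w x y z ∧ MatchCol col ℓ x y z w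

/-- Bad subgraph of type (b): an alternating 5-cycle colored with two colors `i ≠ ℓ`,
where `i` appears on a 2-edge path plus a vertex-disjoint edge and `ℓ` on the remaining
two nonadjacent edges, with all vertices in `S`. -/
def TypeB {n : ℕ} {α : Type*} (col : Sym2 (Fin n) → α → Prop) (S : Finset (Fin n)) : Prop :=
  ∃ (v₀ v₁ v₂ v₃ v₄ : Fin n) (i ℓ : α),
    v₀ ∈ S ∧ v₁ ∈ S ∧ v₂ ∈ S ∧ v₃ ∈ S ∧ v₄ ∈ S ∧ i ≠ ℓ ∧
    List.Pairwise (· ≠ ·) [v₀, v₁, v₂, v₃, v₄] ∧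
    col s(v₀, v₁) i ∧ col s(v₁, v₂) i ∧ col s(v₃, v₄) i ∧
    col s(v₂, v₃) ℓ ∧ col s(v₄, v₀) ℓ

/-- Bad subgraph of type (c): a 6-edge subgraph on 5 vertices with three distinct colors,
where color `i` forms a 2-edge path and colors `ℓ`, `m` each form 2-edge matchings,
containing a triangle whose edges use exactly two colors. -/
def TypeC {n : ℕ} {α : Type*} (col : Sym2 (Fin n) → α → Prop) (S : Finset (Fin n)) : Prop :=
  ∃ (a b d x y u v p q r w : Fin n) (i ℓ m : α),
    a ∈ S ∧ b ∈ S ∧ d ∈ S ∧ x ∈ S ∧ y ∈ S ∧ u ∈ S ∧ v ∈ S ∧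
    p ∈ S ∧ q ∈ S ∧ r ∈ S ∧ w ∈ S ∧
    i ≠ ℓ ∧ i ≠ m ∧ ℓ ≠ m ∧
    PathCol col i a b d ∧ MatchCol col ℓ x y u v ∧ MatchCol col m p q r w ∧
    TwoColTriIn ({(s(a, b), i), (s(b, d), i), (s(x, y), ℓ), (s(u, v), ℓ),
      (s(p, q), m), (s(r, w), m)} : Set (Sym2 (Fin n) × α))

/-- Bad subgraph of type (d): a 6-edge subgraph on 5 vertices with three distinct colors,
where one color forms a 2-edge matching and each of the other two forms a 2-edge path. -/
def TypeD {n : ℕ} {α : Type*} (col : Sym2 (Fin n) → α → Prop) (S : Finset (Fin n)) : Prop :=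
  ∃ (a b d a' b' d' x y u v : Fin n) (i ℓ m : α),
    a ∈ S ∧ b ∈ S ∧ d ∈ S ∧ a' ∈ S ∧ b' ∈ S ∧ d' ∈ S ∧
    x ∈ S ∧ y ∈ S ∧ u ∈ S ∧ v ∈ S ∧
    i ≠ ℓ ∧ i ≠ m ∧ ℓ ≠ m ∧
    PathCol col i a b d ∧ PathCol col ℓ a' b' d' ∧ MatchCol col m x y u v

/-- Bad subgraph of type (e): a 6-edge subgraph on 5 vertices with three distinct colors,
where two colors form 2-edge matchings and the third forms a 2-edge path, containing
no triangle colored with exactly two colors. -/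
def TypeE {n : ℕ} {α : Type*} (col : Sym2 (Fin n) → α → Prop) (S : Finset (Fin n)) : Prop :=
  ∃ (a b d x y u v p q r w : Fin n) (i ℓ m : α),
    a ∈ S ∧ b ∈ S ∧ d ∈ S ∧ x ∈ S ∧ y ∈ S ∧ u ∈ S ∧ v ∈ S ∧
    p ∈ S ∧ q ∈ S ∧ r ∈ S ∧ w ∈ S ∧
    i ≠ ℓ ∧ i ≠ m ∧ ℓ ≠ m ∧
    PathCol col i a b d ∧ MatchCol col ℓ x y u v ∧ MatchCol col m p q r w ∧
    ¬ TwoColTriIn ({(s(a, b), i), (s(b, d), i), (s(x, y), ℓ), (s(u, v), ℓ),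
      (s(p, q), m), (s(r, w), m)} : Set (Sym2 (Fin n) × α))

/-- Bad subgraph of type (f): a 6-edge subgraph on 5 vertices formed by three
monochromatic 2-edge matchings of three distinct colors. -/
def TypeF {n : ℕ} {α : Type*} (col : Sym2 (Fin n) → α → Prop) (S : Finset (Fin n)) : Prop :=
  ∃ (x₁ y₁ u₁ v₁ x₂ y₂ u₂ v₂ x₃ y₃ u₃ v₃ : Fin n) (i ℓ m : α),
    x₁ ∈ S ∧ y₁ ∈ S ∧ u₁ ∈ S ∧ v₁ ∈ S ∧ x₂ ∈ S ∧ y₂ ∈ S ∧ u₂ ∈ S ∧ v₂ ∈ S ∧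
    x₃ ∈ S ∧ y₃ ∈ S ∧ u₃ ∈ S ∧ v₃ ∈ S ∧
    i ≠ ℓ ∧ i ≠ m ∧ ℓ ≠ m ∧
    MatchCol col i x₁ y₁ u₁ v₁ ∧ MatchCol col ℓ x₂ y₂ u₂ v₂ ∧ MatchCol col m x₃ y₃ u₃ v₃

/-- Bad subgraph of type `t`, where `t = 0,1,2,3,4,5` codes types (a)-(f). -/
def BadOfType {n : ℕ} {α : Type*} (t : ℕ) (col : Sym2 (Fin n) → α → Prop)
    (S : Finset (Fin n)) : Prop :=
  if t = 0 then TypeA col S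
  else if t = 1 then TypeB col S
  else if t = 2 then TypeC col S
  else if t = 3 then TypeD col S
  else if t = 4 then TypeE col S
  else TypeF col S


section Aux



lemma sym2_ne {β : Type*} {x y u v : β} (h : ¬((x = u ∧ y = v) ∨ (x = v ∧ y = u))) :
    s(x, y) ≠ s(u, v) := fun he => h (Sym2.eq_iff.1 he)

lemma no_five_edges {n : ℕ} {α : Type*} (hn : 5 ≤ n) (c : Sym2 (Fin n) → α)
    (hc : IsPQColoring 5 8 c) {i j : α} (hij : i ≠ j)
    {x1 y1 x2 y2 x3 y3 a1 b1 a2 b2 : Fin n} (S0 : Finset (Fin n)) (hS0 : S0.card ≤ 5)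
    (hm : ∀ w ∈ [x1, y1, x2, y2, x3, y3, a1, b1, a2, b2], w ∈ S0)
    (hne1 : x1 ≠ y1) (hne2 : x2 ≠ y2) (hne3 : x3 ≠ y3) (hna1 : a1 ≠ b1) (hna2 : a2 ≠ b2)
    (hE12 : s(x1, y1) ≠ s(x2, y2)) (hE13 : s(x1, y1) ≠ s(x3, y3)) (hE23 : s(x2, y2) ≠ s(x3, y3))
    (hF12 : s(a1, b1) ≠ s(a2, b2))
    (hc1 : c s(x1, y1) = i) (hc2 : c s(x2, y2) = i) (hc3 : c s(x3, y3) = i)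
    (hd1 : c s(a1, b1) = j) (hd2 : c s(a2, b2) = j) : False := by
  classical
  obtain ⟨S, hS0S, -, hScard⟩ := Finset.exists_subsuperset_card_eq (S0.subset_univ) hS0
    (by simpa using hn)
  have h8 := hc S hScard
  simp only [List.mem_cons, List.not_mem_nil, or_false] at hm
  -- the finset of non-diagonal edges within S
  set F : Finset (Sym2 (Fin n)) := S.sym2.filter (fun e => ¬ e.IsDiag) with hF
  set Es : Finset (Sym2 (Fin n)) :=
    {s(x1, y1), s(x2, y2), s(x3, y3), s(a1, b1), s(a2, b2)} with hEs
  have hEsub : Es ⊆ F := by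
    intro e he
    simp only [hEs, Finset.mem_insert, Finset.mem_singleton] at he
    simp only [hF, Finset.mem_filter]
    rcases he with rfl | rfl | rfl | rfl | rfl <;>
      refine ⟨Finset.mk_mem_sym2_iff.2 ⟨hS0S (hm _ (by tauto)), hS0S (hm _ (by tauto))⟩, by simpa⟩
  have hEscard : Es.card = 5 := by
    have hcol : ∀ k, k ∈ [s(x1,y1), s(x2,y2), s(x3,y3)] → c k = i := by
      simp; tauto
    have h14 : s(x1, y1) ≠ s(a1, b1) := fun h => hij (by rw [← hc1, h, hd1])
    have h15 : s(x1, y1) ≠ s(a2, b2) := fun h => hij (by rw [← hc1, h, hd2])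
    have h24 : s(x2, y2) ≠ s(a1, b1) := fun h => hij (by rw [← hc2, h, hd1])
    have h25 : s(x2, y2) ≠ s(a2, b2) := fun h => hij (by rw [← hc2, h, hd2])
    have h34 : s(x3, y3) ≠ s(a1, b1) := fun h => hij (by rw [← hc3, h, hd1])
    have h35 : s(x3, y3) ≠ s(a2, b2) := fun h => hij (by rw [← hc3, h, hd2])
    simp [hEs, Finset.card_insert_of_notMem, *]
  have hFcard : F.card ≤ 10 := by
    have h1 : (S.sym2.filter (fun e => e.IsDiag)).card + F.card = S.sym2.card :=
      Finset.card_filter_add_card_filter_not (s := S.sym2) (p := fun e => e.IsDiag)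
    have h2 : S.sym2.card = 15 := by rw [Finset.card_sym2, hScard]; rfl
    have h3 : 5 ≤ (S.sym2.filter (fun e => e.IsDiag)).card := by
      have : S.image Sym2.diag ⊆ S.sym2.filter (fun e => e.IsDiag) := by
        intro e he
        simp only [Finset.mem_image] at he
        obtain ⟨a, ha, rfl⟩ := he
        simp [Finset.mk_mem_sym2_iff, Sym2.diag, ha]
      calc 5 = (S.image Sym2.diag).card := by
                rw [Finset.card_image_of_injective _ Sym2.diag_injective, hScard]
        _ ≤ _ := Finset.card_le_card this
    omega
  -- bound the color set
  have hsub : {k : α | ∃ x ∈ S, ∃ y ∈ S, x ≠ y ∧ c s(x, y) = k} ⊆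
      c '' ↑(F \ Es) ∪ {i, j} := by
    rintro k ⟨x, hx, y, hy, hxy, rfl⟩
    have heF : s(x, y) ∈ F := by
      simp only [hF, Finset.mem_filter]
      exact ⟨Finset.mk_mem_sym2_iff.2 ⟨hx, hy⟩, by simpa⟩
    by_cases he : s(x, y) ∈ Es
    · right
      simp only [hEs, Finset.mem_insert, Finset.mem_singleton] at he
      rcases he with h | h | h | h | h <;> rw [h] <;> simp [hc1, hc2, hc3, hd1, hd2]
    · exact Or.inl ⟨s(x, y), by simp [Finset.mem_sdiff, heF, he], rfl⟩
  have hle : {k : α | ∃ x ∈ S, ∃ y ∈ S, x ≠ y ∧ c s(x, y) = k}.ncard ≤ 7 := by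
    refine le_trans (Set.ncard_le_ncard hsub
      (((F \ Es).finite_toSet.image c).union ((Set.finite_singleton j).insert i))) ?_
    refine le_trans (Set.ncard_union_le _ _) ?_
    have h1 : (c '' ↑(F \ Es)).ncard ≤ 5 := by
      refine le_trans (Set.ncard_image_le (Finset.finite_toSet _)) ?_
      rw [Set.ncard_coe_finset, Finset.card_sdiff_of_subset hEsub, hEscard]
      omega
    have h2 : ({i, j} : Set α).ncard ≤ 2 :=
      le_trans (Set.ncard_insert_le _ _) (by simp)
    omega
  omega

lemma iso_extract {n : ℕ} {W : Type*} (G : SimpleGraph (Fin n)) (S : Set (Fin n))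
    (H : SimpleGraph W) (φ : G.induce S ≃g H) :
    ∃ f : W → Fin n, Function.Injective f ∧ S = Set.range f ∧
      ∀ w w', H.Adj w w' → G.Adj (f w) (f w') := by
  refine ⟨fun w => (φ.symm w : Fin n), ?_, ?_, ?_⟩
  · intro a b h
    exact φ.symm.injective (Subtype.val_injective h)
  · ext x
    constructor
    · intro hx
      exact ⟨φ ⟨x, hx⟩, by simp⟩
    · rintro ⟨w, rfl⟩
      exact (φ.symm w).2
  · intro w w' h
    have := φ.symm.map_adj_iff.2 h
    simpa [comap_adj] using this

lemma supp_disjoint {V : Type*} (G : SimpleGraph V) (K K' : G.ConnectedComponent)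
    (h : K ≠ K') {v : V} (hv : v ∈ K.supp) (hv' : v ∈ K'.supp) : False := by
  rw [ConnectedComponent.mem_supp_iff] at hv hv'
  exact h (hv ▸ hv' ▸ rfl)



lemma star_structure {n : ℕ} (G : SimpleGraph (Fin n)) (S : Set (Fin n))
    (h : Nonempty (G.induce S ≃g starK13)) :
    ∃ z a b d : Fin n, z ≠ a ∧ z ≠ b ∧ z ≠ d ∧ a ≠ b ∧ a ≠ d ∧ b ≠ d ∧
      S = {z, a, b, d} ∧ G.Adj z a ∧ G.Adj z b ∧ G.Adj z d := by
  obtain ⟨φ⟩ := h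
  obtain ⟨f, hinj, hrange, hadj⟩ := iso_extract G S starK13 φ
  refine ⟨f (.inl 0), f (.inr 0), f (.inr 1), f (.inr 2),
    fun h => by simpa using hinj h, fun h => by simpa using hinj h,
    fun h => by simpa using hinj h, fun h => by simpa using hinj h,
    fun h => by simpa using hinj h, fun h => by simpa using hinj h, ?_, ?_, ?_, ?_⟩
  · rw [hrange]
    ext x
    constructor
    · rintro ⟨(w | w), rfl⟩ <;> fin_cases w <;> simp
    · rintro (rfl | rfl | rfl | rfl) <;> [exact ⟨.inl 0, rfl⟩; exact ⟨.inr 0, rfl⟩;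
        exact ⟨.inr 1, rfl⟩; exact ⟨.inr 2, rfl⟩]
  all_goals exact hadj _ _ (by simp [starK13])

lemma path3_structure {n : ℕ} (G : SimpleGraph (Fin n)) (S : Set (Fin n))
    (h : Nonempty (G.induce S ≃g pathGraph 3)) :
    ∃ a b d : Fin n, a ≠ b ∧ a ≠ d ∧ b ≠ d ∧
      S = {a, b, d} ∧ G.Adj a b ∧ G.Adj b d := by
  obtain ⟨φ⟩ := h
  obtain ⟨f, hinj, hrange, hadj⟩ := iso_extract G S (pathGraph 3) φ
  refine ⟨f 0, f 1, f 2,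
    fun h => by simpa using hinj h, fun h => by simpa using hinj h,
    fun h => by simpa using hinj h, ?_, ?_, ?_⟩
  · rw [hrange]
    ext x
    constructor
    · rintro ⟨w, rfl⟩
      fin_cases w <;> simp
    · rintro (rfl | rfl | rfl) <;> [exact ⟨0, rfl⟩; exact ⟨1, rfl⟩; exact ⟨2, rfl⟩]
  all_goals exact hadj _ _ (by rw [pathGraph_adj]; decide)

lemma path4_structure {n : ℕ} (G : SimpleGraph (Fin n)) (S : Set (Fin n))
    (h : Nonempty (G.induce S ≃g pathGraph 4)) :
    ∃ a b d e : Fin n, a ≠ b ∧ a ≠ d ∧ a ≠ e ∧ b ≠ d ∧ b ≠ e ∧ d ≠ e ∧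
      S = {a, b, d, e} ∧ G.Adj a b ∧ G.Adj b d ∧ G.Adj d e := by
  obtain ⟨φ⟩ := h
  obtain ⟨f, hinj, hrange, hadj⟩ := iso_extract G S (pathGraph 4) φ
  refine ⟨f 0, f 1, f 2, f 3,
    fun h => by simpa using hinj h, fun h => by simpa using hinj h,
    fun h => by simpa using hinj h, fun h => by simpa using hinj h,
    fun h => by simpa using hinj h, fun h => by simpa using hinj h, ?_, ?_, ?_, ?_⟩
  · rw [hrange]
    ext x
    constructor
    · rintro ⟨w, rfl⟩
      fin_cases w <;> simp
    · rintro (rfl | rfl | rfl | rfl) <;>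
        [exact ⟨0, rfl⟩; exact ⟨1, rfl⟩; exact ⟨2, rfl⟩; exact ⟨3, rfl⟩]
  all_goals exact hadj _ _ (by rw [pathGraph_adj]; decide)

lemma card5 {β : Type*} [DecidableEq β] (a b c d e : β) :
    ({a, b, c, d, e} : Finset β).card ≤ 5 := by
  refine le_trans (Finset.card_insert_le _ _) (Nat.succ_le_succ ?_)
  refine le_trans (Finset.card_insert_le _ _) (Nat.succ_le_succ ?_)
  refine le_trans (Finset.card_insert_le _ _) (Nat.succ_le_succ ?_)
  refine le_trans (Finset.card_insert_le _ _) (Nat.succ_le_succ ?_)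
  simp

lemma third_elt {β : Type*} {a b d u v : β} (hu : u ∈ ({a, b, d} : Set β))
    (hv : v ∈ ({a, b, d} : Set β)) (huv : u ≠ v) :
    ∃ w, ∀ x ∈ ({a, b, d} : Set β), x = u ∨ x = v ∨ x = w := by
  simp only [Set.mem_insert_iff, Set.mem_singleton_iff] at hu hv
  rcases hu with rfl | rfl | rfl <;> rcases hv with rfl | rfl | rfl <;>
    first
      | exact absurd rfl huv
      | exact ⟨a, by intro x hx; simp only [Set.mem_insert_iff, Set.mem_singleton_iff] at hx; tauto⟩
      | exact ⟨b, by intro x hx; simp only [Set.mem_insert_iff, Set.mem_singleton_iff] at hx; tauto⟩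
      | exact ⟨d, by intro x hx; simp only [Set.mem_insert_iff, Set.mem_singleton_iff] at hx; tauto⟩


lemma star_cover {n : ℕ} {G : SimpleGraph (Fin n)} {z a b d u v : Fin n}
    (hza : G.Adj z a) (hzb : G.Adj z b) (hzd : G.Adj z d)
    (hab : a ≠ b) (had : a ≠ d) (hbd : b ≠ d)
    (hu : u ∈ ({z, a, b, d} : Set (Fin n))) (hv : v ∈ ({z, a, b, d} : Set (Fin n)))
    (huv : u ≠ v) :
    ∃ p q w : Fin n, p ≠ q ∧ G.Adj z p ∧ G.Adj z q ∧
      (z = u ∨ z = v ∨ z = w) ∧ (p = u ∨ p = v ∨ p = w) ∧ (q = u ∨ q = v ∨ q = w) := by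
  simp only [Set.mem_insert_iff, Set.mem_singleton_iff] at hu hv
  rcases hu with h1 | h1 | h1 | h1 <;> rcases hv with h2 | h2 | h2 | h2 <;>
    first
      | exact absurd (h1.trans h2.symm) huv
      | (refine ⟨a, b, b, hab, hza, hzb, ?_, ?_, ?_⟩ <;> (simp [h1, h2]; done))
      | (refine ⟨b, a, a, hab.symm, hzb, hza, ?_, ?_, ?_⟩ <;> (simp [h1, h2]; done))
      | (refine ⟨d, a, a, had.symm, hzd, hza, ?_, ?_, ?_⟩ <;> (simp [h1, h2]; done))
      | (refine ⟨a, b, z, hab, hza, hzb, ?_, ?_, ?_⟩ <;> (simp [h1, h2]; done))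
      | (refine ⟨a, d, z, had, hza, hzd, ?_, ?_, ?_⟩ <;> (simp [h1, h2]; done))
      | (refine ⟨b, d, z, hbd, hzb, hzd, ?_, ?_, ?_⟩ <;> (simp [h1, h2]; done))

end Aux

set_option maxHeartbeats 2000000 in
/-- In a `(5,8)`-coloring of `K_n` (`n ≥ 5`) with no monochromatic
triangle, a maximal monochromatic component isomorphic to `K_{1,3}` shares at most one
vertex with any other maximal monochromatic component isomorphic to `P_3`, `P_4`, or
`K_{1,3}`. -/
theorem K13_shares_at_most_one_vertex {n : ℕ} {α : Type*} (hn : 5 ≤ n)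
    (c : Sym2 (Fin n) → α) (hc : IsPQColoring 5 8 c) (htri : ¬ HasMonoTriangle c)
    (X Y : Σ i : α, (colorClass c i).ConnectedComponent)
    (hX : X ∈ setD c)
    (hY : Y ∈ setB c ∪ setC c ∪ setD c)
    (hXY : X ≠ Y) :
    (X.2.supp ∩ Y.2.supp).ncard ≤ 1 := by
    classical
  by_contra hcon
  push_neg at hcon
  obtain ⟨u, v, ⟨huX, huY⟩, ⟨hvX, hvY⟩, huv⟩ :=
    (Set.one_lt_ncard_iff (Set.toFinite _)).1 hcon
  have hcc : ∀ (k : α) (x y : Fin n), (colorClass c k).Adj x y → x ≠ y ∧ c s(x, y) = k :=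
    fun k x y h => h
  by_cases hij : X.1 = Y.1
  · obtain ⟨iX, KX⟩ := X
    obtain ⟨iY, KY⟩ := Y
    simp only at hij huX huY hvX hvY
    subst hij
    exact supp_disjoint (colorClass c iX) KX KY
      (fun h => hXY (by rw [h])) huX huY
  · obtain ⟨z, a, b, d, hza, hzb, hzd, hab, had, hbd, hXsupp, hAza, hAzb, hAzd⟩ :=
      star_structure (colorClass c X.1) X.2.supp hX
    have huX' : u ∈ ({z, a, b, d} : Set (Fin n)) := hXsupp ▸ huX
    have hvX' : v ∈ ({z, a, b, d} : Set (Fin n)) := hXsupp ▸ hvX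
    rw [Set.mem_union, Set.mem_union] at hY
    rcases hY with (hYB | hYC) | hYD
    · -- Y ≅ P_3
      obtain ⟨p0, p1, p2, h01, h02, h12, hYsupp, hA01, hA12⟩ :=
        path3_structure (colorClass c Y.1) Y.2.supp hYB
      obtain ⟨w, hw⟩ := third_elt (hYsupp ▸ huY) (hYsupp ▸ hvY) huv
      set S0 : Finset (Fin n) := {w, z, a, b, d} with hS0
      have huS : u ∈ S0 := by
        rcases huX' with rfl | rfl | rfl | rfl <;> simp [hS0]
      have hvS : v ∈ S0 := by
        rcases hvX' with rfl | rfl | rfl | rfl <;> simp [hS0]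
      have hpS : ∀ x ∈ ({p0, p1, p2} : Set (Fin n)), x ∈ S0 := by
        intro x hx
        rcases hw x hx with h | h | h <;> rw [h]
        · exact huS
        · exact hvS
        · simp [hS0]
      refine no_five_edges hn c hc hij S0 (card5 _ _ _ _ _) ?_
        (hcc _ _ _ hAza).1 (hcc _ _ _ hAzb).1 (hcc _ _ _ hAzd).1
        (hcc _ _ _ hA01).1 (hcc _ _ _ hA12).1
        (sym2_ne (by tauto)) (sym2_ne (by tauto)) (sym2_ne (by tauto))
        (sym2_ne (by tauto))
        (hcc _ _ _ hAza).2 (hcc _ _ _ hAzb).2 (hcc _ _ _ hAzd).2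
        (hcc _ _ _ hA01).2 (hcc _ _ _ hA12).2
      intro x hx
      simp only [List.mem_cons, List.not_mem_nil, or_false] at hx
      rcases hx with rfl | rfl | rfl | rfl | rfl | rfl | rfl | rfl | rfl | rfl
      · simp [hS0]
      · simp [hS0]
      · simp [hS0]
      · simp [hS0]
      · simp [hS0]
      · simp [hS0]
      · exact hpS _ (by simp)
      · exact hpS _ (by simp)
      · exact hpS _ (by simp)
      · exact hpS _ (by simp)
    · -- Y ≅ P_4
      obtain ⟨p0, p1, p2, p3, h01, h02, h03, h12, h13, h23, hYsupp, hA01, hA12, hA23⟩ :=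
        path4_structure (colorClass c Y.1) Y.2.supp hYC
      obtain ⟨p, q, w, hpq, hAzp, hAzq, hzw, hpw, hqw⟩ :=
        star_cover hAza hAzb hAzd hab had hbd huX' hvX' huv
      have huY' : u ∈ ({p0, p1, p2, p3} : Set (Fin n)) := hYsupp ▸ huY
      have hvY' : v ∈ ({p0, p1, p2, p3} : Set (Fin n)) := hYsupp ▸ hvY
      set S0 : Finset (Fin n) := {w, p0, p1, p2, p3} with hS0
      have huS : u ∈ S0 := by
        rcases huY' with rfl | rfl | rfl | rfl <;> simp [hS0]
      have hvS : v ∈ S0 := by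
        rcases hvY' with rfl | rfl | rfl | rfl <;> simp [hS0]
      have hcov : ∀ x : Fin n, (x = u ∨ x = v ∨ x = w) → x ∈ S0 := by
        intro x hx
        rcases hx with h | h | h <;> rw [h]
        · exact huS
        · exact hvS
        · simp [hS0]
      refine no_five_edges hn c hc (Ne.symm hij) S0 (card5 _ _ _ _ _) ?_
        (hcc _ _ _ hA01).1 (hcc _ _ _ hA12).1 (hcc _ _ _ hA23).1
        (hcc _ _ _ hAzp).1 (hcc _ _ _ hAzq).1
        (sym2_ne (by tauto)) (sym2_ne (by tauto)) (sym2_ne (by tauto))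
        (sym2_ne ?_)
        (hcc _ _ _ hA01).2 (hcc _ _ _ hA12).2 (hcc _ _ _ hA23).2
        (hcc _ _ _ hAzp).2 (hcc _ _ _ hAzq).2
      · intro x hx
        simp only [List.mem_cons, List.not_mem_nil, or_false] at hx
        rcases hx with rfl | rfl | rfl | rfl | rfl | rfl | rfl | rfl | rfl | rfl
        · simp [hS0]
        · simp [hS0]
        · simp [hS0]
        · simp [hS0]
        · simp [hS0]
        · simp [hS0]
        · exact hcov _ hzw
        · exact hcov _ hpw
        · exact hcov _ hzw
        · exact hcov _ hqw
      · have := (hcc _ _ _ hAzq).1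
        tauto
    · -- Y ≅ K_{1,3}
      obtain ⟨z', a', b', d', hza', hzb', hzd', hab', had', hbd', hYsupp, hA1, hA2, hA3⟩ :=
        star_structure (colorClass c Y.1) Y.2.supp hYD
      obtain ⟨p, q, w, hpq, hAzp, hAzq, hzw, hpw, hqw⟩ :=
        star_cover hAza hAzb hAzd hab had hbd huX' hvX' huv
      have huY' : u ∈ ({z', a', b', d'} : Set (Fin n)) := hYsupp ▸ huY
      have hvY' : v ∈ ({z', a', b', d'} : Set (Fin n)) := hYsupp ▸ hvY
      set S0 : Finset (Fin n) := {w, z', a', b', d'} with hS0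
      have huS : u ∈ S0 := by
        rcases huY' with rfl | rfl | rfl | rfl <;> simp [hS0]
      have hvS : v ∈ S0 := by
        rcases hvY' with rfl | rfl | rfl | rfl <;> simp [hS0]
      have hcov : ∀ x : Fin n, (x = u ∨ x = v ∨ x = w) → x ∈ S0 := by
        intro x hx
        rcases hx with h | h | h <;> rw [h]
        · exact huS
        · exact hvS
        · simp [hS0]
      refine no_five_edges hn c hc (Ne.symm hij) S0 (card5 _ _ _ _ _) ?_
        (hcc _ _ _ hA1).1 (hcc _ _ _ hA2).1 (hcc _ _ _ hA3).1
        (hcc _ _ _ hAzp).1 (hcc _ _ _ hAzq).1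
        (sym2_ne (by tauto)) (sym2_ne (by tauto)) (sym2_ne (by tauto))
        (sym2_ne ?_)
        (hcc _ _ _ hA1).2 (hcc _ _ _ hA2).2 (hcc _ _ _ hA3).2
        (hcc _ _ _ hAzp).2 (hcc _ _ _ hAzq).2
      · intro x hx
        simp only [List.mem_cons, List.not_mem_nil, or_false] at hx
        rcases hx with rfl | rfl | rfl | rfl | rfl | rfl | rfl | rfl | rfl | rfl
        · simp [hS0]
        · simp [hS0]
        · simp [hS0]
        · simp [hS0]
        · simp [hS0]
        · simp [hS0]
        · exact hcov _ hzw
        · exact hcov _ hpw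
        · exact hcov _ hzw
        · exact hcov _ hqw
      · have := (hcc _ _ _ hAzq).1
        tauto
end

section
/- Let n ≥ 5 and let c be a (5,8)-coloring of K_n with no monochromatic triangle. Then for every X ∈ B_2 there exists exactly one Y ∈ B_2 with Y ≠ X such that |V(X) ∩ V(Y)| = 2; consequently |B_2| is even and the components of B_2 can be partitioned into pairs each sharing exactly two vertices. -/
open SimpleGraph

section AuxLemmas

open Finset in
private lemma seven_colors {n : ℕ} {α : Type*} [DecidableEq α] (hn : 5 ≤ n)
    {c : Sym2 (Fin n) → α} (hc : IsPQColoring 5 8 c)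
    (T : Finset (Fin n)) (hT : T.card ≤ 5)
    (E : Finset (Sym2 (Fin n)))
    (hEv : ∀ e ∈ E, ¬ e.IsDiag ∧ ∀ v ∈ e, v ∈ T)
    (hEcard : 6 ≤ E.card) (him : (E.image c).card ≤ 3) : False := by
  classical
  obtain ⟨S, hTS, -, hS⟩ := Finset.exists_subsuperset_card_eq (Finset.subset_univ T) hT
    (by simpa using hn)
  set F : Finset (Sym2 (Fin n)) := S.offDiag.image Sym2.mk.uncurry with hF
  have hEF : E ⊆ F := by
    intro e he
    obtain ⟨hd, hv⟩ := hEv e he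
    revert hd hv
    induction e using Sym2.ind with
    | _ x y =>
      intro hd hv
      have hx : x ∈ S := hTS (hv x (Sym2.mem_mk_left x y))
      have hy : y ∈ S := hTS (hv y (Sym2.mem_mk_right x y))
      have hxy : x ≠ y := fun h => hd (by simp [h])
      exact Finset.mem_image.mpr ⟨(x, y), Finset.mem_offDiag.mpr ⟨hx, hy, hxy⟩, rfl⟩
  have hFcard : F.card = 10 := by
    rw [hF, Sym2.card_image_offDiag, hS]; decide
  have h8 := hc S hS
  have hset : {j : α | ∃ x ∈ S, ∃ y ∈ S, x ≠ y ∧ c s(x, y) = j} = ↑(F.image c) := by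
    ext j
    constructor
    · rintro ⟨x, hx, y, hy, hxy, hj⟩
      exact Finset.mem_coe.mpr (Finset.mem_image.mpr
        ⟨s(x, y), Finset.mem_image.mpr ⟨(x, y), Finset.mem_offDiag.mpr ⟨hx, hy, hxy⟩, rfl⟩, hj⟩)
    · intro hj
      obtain ⟨e, heF, hce⟩ := Finset.mem_image.mp (Finset.mem_coe.mp hj)
      obtain ⟨⟨x, y⟩, hxy, rfl⟩ := Finset.mem_image.mp heF
      obtain ⟨hx, hy, hne⟩ := Finset.mem_offDiag.mp hxy
      exact ⟨x, hx, y, hy, hne, hce⟩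
  rw [hset, Set.ncard_coe_finset] at h8
  have hsplit : (F.image c).card ≤ ((F \ E).image c).card + (E.image c).card := by
    calc (F.image c).card = (((F \ E) ∪ E).image c).card := by
          rw [Finset.sdiff_union_of_subset hEF]
      _ = ((F \ E).image c ∪ E.image c).card := by rw [Finset.image_union]
      _ ≤ _ := Finset.card_union_le _ _
  have h1 : ((F \ E).image c).card ≤ (F \ E).card := Finset.card_image_le
  have h2 : (F \ E).card = 10 - E.card := by rw [Finset.card_sdiff_of_subset hEF, hFcard]
  have h3 : E.card ≤ F.card := Finset.card_le_card hEF
  omega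

private lemma setB_struct {n : ℕ} {α : Type*} {c : Sym2 (Fin n) → α}
    {X : Σ i : α, (colorClass c i).ConnectedComponent} (hX : X ∈ setB c) :
    ∃ a b d : Fin n, a ≠ b ∧ b ≠ d ∧ a ≠ d ∧
      X.2.supp = {a, b, d} ∧ c s(a, b) = X.1 ∧ c s(b, d) = X.1 ∧ c s(a, d) ≠ X.1 := by
  obtain ⟨e⟩ := hX
  let f : pathGraph 3 ≃g (colorClass c X.1).induce X.2.supp := e.symm
  have hadj : ∀ u v : Fin 3, (pathGraph 3).Adj u v →
      (colorClass c X.1).Adj ((f u) : Fin n) ((f v) : Fin n) := fun u v huv =>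
    f.map_rel_iff.mpr huv
  have h01 : (colorClass c X.1).Adj ((f 0) : Fin n) ((f 1) : Fin n) :=
    hadj 0 1 (by rw [pathGraph_adj]; decide)
  have h12 : (colorClass c X.1).Adj ((f 1) : Fin n) ((f 2) : Fin n) :=
    hadj 1 2 (by rw [pathGraph_adj]; decide)
  have had : ((f 0) : Fin n) ≠ ((f 2) : Fin n) := by
    intro h
    have h02 : (0 : Fin 3) = 2 := f.injective (Subtype.val_injective h)
    exact absurd h02 (by decide)
  have h02 : ¬ (colorClass c X.1).Adj ((f 0) : Fin n) ((f 2) : Fin n) := by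
    intro h
    have : (pathGraph 3).Adj 0 2 := f.map_rel_iff.mp h
    rw [pathGraph_adj] at this
    revert this; decide
  have hsupp : X.2.supp = {((f 0) : Fin n), ((f 1) : Fin n), ((f 2) : Fin n)} := by
    ext v
    simp only [Set.mem_insert_iff, Set.mem_singleton_iff]
    constructor
    · intro hv
      have h3 : ∀ w : Fin 3, w = 0 ∨ w = 1 ∨ w = 2 := by decide
      have hkey : f (e ⟨v, hv⟩) = ⟨v, hv⟩ := e.symm_apply_apply ⟨v, hv⟩
      rcases h3 (e ⟨v, hv⟩) with h | h | h <;> rw [h] at hkey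
      · exact Or.inl (congrArg Subtype.val hkey).symm
      · exact Or.inr (Or.inl (congrArg Subtype.val hkey).symm)
      · exact Or.inr (Or.inr (congrArg Subtype.val hkey).symm)
    · rintro (h | h | h) <;> rw [h] <;> exact Subtype.coe_prop _
  exact ⟨(f 0 : Fin n), (f 1 : Fin n), (f 2 : Fin n), h01.1, h12.1, had, hsupp,
    h01.2, h12.2, fun hc' => h02 ⟨had, hc'⟩⟩

private lemma supp_disjoint_of_ne {n : ℕ} {α : Type*} {c : Sym2 (Fin n) → α}
    {X Y : Σ i : α, (colorClass c i).ConnectedComponent} (hne : X ≠ Y) (h1 : X.1 = Y.1) :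
    Disjoint X.2.supp Y.2.supp := by
  obtain ⟨i, K⟩ := X
  obtain ⟨j, L⟩ := Y
  cases h1
  have hKL : K ≠ L := fun h => hne (by rw [h])
  exact SimpleGraph.pairwise_disjoint_supp_connectedComponent _ hKL

private lemma not_supp_eq {n : ℕ} {α : Type*} {c : Sym2 (Fin n) → α}
    {X Y : Σ i : α, (colorClass c i).ConnectedComponent}
    (hX : X ∈ setB c) (hY : Y ∈ setB c) (hne : X ≠ Y) (hsupp : X.2.supp = Y.2.supp) :
    False := by
  obtain ⟨a, b, d, hab, hbd, had, hXs, hcab, hcbd, hcad⟩ := setB_struct hX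
  obtain ⟨a', b', d', hab', hbd', had', hYs, hcab', hcbd', hcad'⟩ := setB_struct hY
  have hij : X.1 ≠ Y.1 := by
    intro h
    have hd := supp_disjoint_of_ne hne h
    have haX : a ∈ X.2.supp := by rw [hXs]; exact Set.mem_insert _ _
    exact (Set.disjoint_left.mp hd haX) (by rwa [← hsupp])
  have hmem : ∀ x : Fin n, x ∈ Y.2.supp → x = a ∨ x = b ∨ x = d := by
    intro x hx
    rw [← hsupp, hXs] at hx
    simpa using hx
  have key : ∀ x y : Fin n, x = a ∨ x = b ∨ x = d → y = a ∨ y = b ∨ y = d →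
      x ≠ y → c s(x, y) = Y.1 → s(x, y) = s(a, d) := by
    have h1 : c s(b, a) = X.1 := by rwa [Sym2.eq_swap]
    have h2 : c s(d, b) = X.1 := by rwa [Sym2.eq_swap]
    have h3 : s(d, a) = s(a, d) := Sym2.eq_swap
    intro x y hx hy hxy hcxy
    rcases hx with rfl | rfl | rfl <;> rcases hy with rfl | rfl | rfl <;>
      first
        | exact absurd rfl hxy
        | rfl
        | exact h3
        | exact absurd (hcab.symm.trans hcxy) hij
        | exact absurd (h1.symm.trans hcxy) hij
        | exact absurd (hcbd.symm.trans hcxy) hij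
        | exact absurd (h2.symm.trans hcxy) hij
  have ha' := hmem a' (by rw [hYs]; exact Set.mem_insert _ _)
  have hb' := hmem b' (by rw [hYs]; simp)
  have hd' := hmem d' (by rw [hYs]; simp)
  have e1 : s(a', b') = s(a, d) := key _ _ ha' hb' hab' hcab'
  have e2 : s(b', d') = s(a, d) := key _ _ hb' hd' hbd' hcbd'
  have e3 : s(a', b') = s(b', d') := e1.trans e2.symm
  rw [Sym2.eq_iff] at e3
  rcases e3 with ⟨h, -⟩ | ⟨h, -⟩
  · exact hab' h
  · exact had' h

end AuxLemmas

private lemma no_two_partners {n : ℕ} {α : Type*} (hn : 5 ≤ n)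
    {c : Sym2 (Fin n) → α} (hc : IsPQColoring 5 8 c)
    {X Y Z : Σ i : α, (colorClass c i).ConnectedComponent}
    (hX : X ∈ setB c) (hY : Y ∈ setB c) (hZ : Z ∈ setB c)
    (hYX : Y ≠ X) (hZX : Z ≠ X) (hYZ : Y ≠ Z)
    (h2Y : 2 ≤ (X.2.supp ∩ Y.2.supp).ncard)
    (h2Z : 2 ≤ (X.2.supp ∩ Z.2.supp).ncard) : False := by
  classical
  obtain ⟨a, b, d, hab, hbd, had, hXs, hcab, hcbd, -⟩ := setB_struct hX
  obtain ⟨a', b', d', hab', hbd', had', hYs, hcab', hcbd', -⟩ := setB_struct hY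
  obtain ⟨p, q, r, hpq, hqr, hpr, hZs, hcpq, hcqr, -⟩ := setB_struct hZ
  have hXY1 : X.1 ≠ Y.1 := by
    intro h
    have hd := supp_disjoint_of_ne (Ne.symm hYX) h
    rw [Set.disjoint_iff_inter_eq_empty.mp hd] at h2Y
    simp at h2Y
  have hXZ1 : X.1 ≠ Z.1 := by
    intro h
    have hd := supp_disjoint_of_ne (Ne.symm hZX) h
    rw [Set.disjoint_iff_inter_eq_empty.mp hd] at h2Z
    simp at h2Z
  have hx3 : X.2.supp.ncard = 3 := by
    rw [hXs]; exact Set.ncard_eq_three.mpr ⟨a, b, d, hab, had, hbd, rfl⟩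
  have hYZ1 : Y.1 ≠ Z.1 := by
    intro h
    have hdisj := supp_disjoint_of_ne hYZ h
    have hAB : Disjoint (X.2.supp ∩ Y.2.supp) (X.2.supp ∩ Z.2.supp) :=
      hdisj.mono Set.inter_subset_right Set.inter_subset_right
    have hU : (X.2.supp ∩ Y.2.supp) ∪ (X.2.supp ∩ Z.2.supp) ⊆ X.2.supp :=
      Set.union_subset Set.inter_subset_left Set.inter_subset_left
    have h4 : 4 ≤ ((X.2.supp ∩ Y.2.supp) ∪ (X.2.supp ∩ Z.2.supp)).ncard := by
      rw [Set.ncard_union_eq hAB (Set.toFinite _) (Set.toFinite _)]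
      omega
    have h3 : ((X.2.supp ∩ Y.2.supp) ∪ (X.2.supp ∩ Z.2.supp)).ncard ≤ X.2.supp.ncard :=
      Set.ncard_le_ncard hU (Set.toFinite _)
    omega
  set FX : Finset (Fin n) := {a, b, d} with hFX
  set FY : Finset (Fin n) := {a', b', d'} with hFY
  set FZ : Finset (Fin n) := {p, q, r} with hFZ
  have hFXc : (↑FX : Set (Fin n)) = X.2.supp := by rw [hXs]; simp [hFX]
  have hFYc : (↑FY : Set (Fin n)) = Y.2.supp := by rw [hYs]; simp [hFY]
  have hFZc : (↑FZ : Set (Fin n)) = Z.2.supp := by rw [hZs]; simp [hFZ]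
  have hFX3 : FX.card = 3 := Finset.card_eq_three.mpr ⟨a, b, d, hab, had, hbd, rfl⟩
  have cards : ∀ (W : Finset (Fin n)) (x y z : Fin n), W = {x, y, z} →
      W.card ≤ 3 := by
    rintro W x y z rfl
    calc ({x, y, z} : Finset (Fin n)).card ≤ ({y, z} : Finset (Fin n)).card + 1 :=
          Finset.card_insert_le _ _
      _ ≤ (({z} : Finset (Fin n)).card + 1) + 1 :=
          Nat.add_le_add_right (Finset.card_insert_le _ _) 1
      _ ≤ 3 := by simp
  have hYsd : (FY \ FX).card ≤ 1 := by
    have h1 : (FY ∩ FX).card + (FY \ FX).card = FY.card :=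
      Finset.card_inter_add_card_sdiff FY FX
    have h2 : FY.card ≤ 3 := cards FY a' b' d' rfl
    have h3 : 2 ≤ (FY ∩ FX).card := by
      have he : (X.2.supp ∩ Y.2.supp) = ↑(FX ∩ FY) := by
        rw [Finset.coe_inter, hFXc, hFYc]
      rw [he, Set.ncard_coe_finset] at h2Y
      rwa [Finset.inter_comm]
    omega
  have hZsd : (FZ \ FX).card ≤ 1 := by
    have h1 : (FZ ∩ FX).card + (FZ \ FX).card = FZ.card :=
      Finset.card_inter_add_card_sdiff FZ FX
    have h2 : FZ.card ≤ 3 := cards FZ p q r rfl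
    have h3 : 2 ≤ (FZ ∩ FX).card := by
      have he : (X.2.supp ∩ Z.2.supp) = ↑(FX ∩ FZ) := by
        rw [Finset.coe_inter, hFXc, hFZc]
      rw [he, Set.ncard_coe_finset] at h2Z
      rwa [Finset.inter_comm]
    omega
  set T : Finset (Fin n) := FX ∪ FY ∪ FZ with hT
  have hTcard : T.card ≤ 5 := by
    have hsub : T ⊆ FX ∪ (FY \ FX) ∪ (FZ \ FX) := by
      intro v hv
      simp only [hT, Finset.mem_union, Finset.mem_sdiff] at hv ⊢
      by_cases hvX : v ∈ FX
      · exact Or.inl (Or.inl hvX)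
      · rcases hv with (h | h) | h
        · exact absurd h hvX
        · exact Or.inl (Or.inr ⟨h, hvX⟩)
        · exact Or.inr ⟨h, hvX⟩
    have c1 : (FX ∪ (FY \ FX) ∪ (FZ \ FX)).card ≤ (FX ∪ (FY \ FX)).card + (FZ \ FX).card :=
      Finset.card_union_le _ _
    have c2 : (FX ∪ (FY \ FX)).card ≤ FX.card + (FY \ FX).card := Finset.card_union_le _ _
    have c3 := Finset.card_le_card hsub
    omega
  have cross : ∀ (e e' : Sym2 (Fin n)) (u v : α), c e = u → c e' = v → u ≠ v → e ≠ e' := by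
    rintro e e' u v rfl rfl huv rfl; exact huv rfl
  have hd1 : s(a, b) ≠ s(b, d) := by
    intro h
    rcases Sym2.eq_iff.mp h with ⟨h1, -⟩ | ⟨h1, -⟩
    · exact hab h1
    · exact had h1
  have hd2 : s(a', b') ≠ s(b', d') := by
    intro h
    rcases Sym2.eq_iff.mp h with ⟨h1, -⟩ | ⟨h1, -⟩
    · exact hab' h1
    · exact had' h1
  have hd3 : s(p, q) ≠ s(q, r) := by
    intro h
    rcases Sym2.eq_iff.mp h with ⟨h1, -⟩ | ⟨h1, -⟩
    · exact hpq h1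
    · exact hpr h1
  set E : Finset (Sym2 (Fin n)) := {s(a, b), s(b, d), s(a', b'), s(b', d'), s(p, q), s(q, r)}
    with hE
  have n1 : s(a, b) ∉ ({s(b, d), s(a', b'), s(b', d'), s(p, q), s(q, r)} : Finset _) := by
    simp only [Finset.mem_insert, Finset.mem_singleton]
    push_neg
    exact ⟨hd1, cross _ _ _ _ hcab hcab' hXY1, cross _ _ _ _ hcab hcbd' hXY1,
      cross _ _ _ _ hcab hcpq hXZ1, cross _ _ _ _ hcab hcqr hXZ1⟩
  have n2 : s(b, d) ∉ ({s(a', b'), s(b', d'), s(p, q), s(q, r)} : Finset _) := by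
    simp only [Finset.mem_insert, Finset.mem_singleton]
    push_neg
    exact ⟨cross _ _ _ _ hcbd hcab' hXY1, cross _ _ _ _ hcbd hcbd' hXY1,
      cross _ _ _ _ hcbd hcpq hXZ1, cross _ _ _ _ hcbd hcqr hXZ1⟩
  have n3 : s(a', b') ∉ ({s(b', d'), s(p, q), s(q, r)} : Finset _) := by
    simp only [Finset.mem_insert, Finset.mem_singleton]
    push_neg
    exact ⟨hd2, cross _ _ _ _ hcab' hcpq hYZ1, cross _ _ _ _ hcab' hcqr hYZ1⟩
  have n4 : s(b', d') ∉ ({s(p, q), s(q, r)} : Finset _) := by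
    simp only [Finset.mem_insert, Finset.mem_singleton]
    push_neg
    exact ⟨cross _ _ _ _ hcbd' hcpq hYZ1, cross _ _ _ _ hcbd' hcqr hYZ1⟩
  have n5 : s(p, q) ∉ ({s(q, r)} : Finset _) := by
    simp only [Finset.mem_singleton]
    exact hd3
  have hEcard : E.card = 6 := by
    rw [hE, Finset.card_insert_of_notMem n1, Finset.card_insert_of_notMem n2,
      Finset.card_insert_of_notMem n3, Finset.card_insert_of_notMem n4,
      Finset.card_insert_of_notMem n5, Finset.card_singleton]
  have hEv : ∀ e ∈ E, ¬ e.IsDiag ∧ ∀ v ∈ e, v ∈ T := by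
    intro e he
    simp only [hE, Finset.mem_insert, Finset.mem_singleton] at he
    rcases he with rfl | rfl | rfl | rfl | rfl | rfl <;>
      refine ⟨by simp [Sym2.mk_isDiag_iff, hab, hbd, hab', hbd', hpq, hqr], ?_⟩ <;>
      · intro v hv
        rw [Sym2.mem_iff] at hv
        rcases hv with rfl | rfl <;> simp [hT, hFX, hFY, hFZ]
  have hsub3 : E.image c ⊆ {X.1, Y.1, Z.1} := by
    intro x hx
    obtain ⟨e, he, rfl⟩ := Finset.mem_image.mp hx
    simp only [hE, Finset.mem_insert, Finset.mem_singleton] at he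
    rcases he with rfl | rfl | rfl | rfl | rfl | rfl <;>
      simp [hcab, hcbd, hcab', hcbd', hcpq, hcqr, Finset.mem_insert]
  have him : (E.image c).card ≤ 3 := by
    refine le_trans (Finset.card_le_card hsub3) ?_
    calc ({X.1, Y.1, Z.1} : Finset α).card ≤ ({Y.1, Z.1} : Finset α).card + 1 :=
          Finset.card_insert_le _ _
      _ ≤ (({Z.1} : Finset α).card + 1) + 1 :=
          Nat.add_le_add_right (Finset.card_insert_le _ _) 1
      _ ≤ 3 := by simp
  exact seven_colors hn hc T hTcard E hEv (by omega) him

/-- In a `(5,8)`-coloring of `K_n` (`n ≥ 5`) with no monochromatic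
triangle, every `X ∈ B₂` has exactly one partner `Y ∈ B₂`, `Y ≠ X`, with
`|V(X) ∩ V(Y)| = 2`; consequently `|B₂|` is even. -/
theorem B2_pairing {n : ℕ} {α : Type*} (hn : 5 ≤ n)
    (c : Sym2 (Fin n) → α) (hc : IsPQColoring 5 8 c) (htri : ¬ HasMonoTriangle c) :
    (∀ X ∈ setB2 c, ∃! Y : (Σ i : α, (colorClass c i).ConnectedComponent),
      Y ∈ setB2 c ∧ Y ≠ X ∧ (X.2.supp ∩ Y.2.supp).ncard = 2) ∧
    Even ((setB2 c).ncard) := by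
  classical
  have hpart : ∀ X ∈ setB2 c, ∃! Y : (Σ i : α, (colorClass c i).ConnectedComponent),
      Y ∈ setB2 c ∧ Y ≠ X ∧ (X.2.supp ∩ Y.2.supp).ncard = 2 := by
    intro X hX2
    obtain ⟨hXB, hXn1⟩ := hX2
    rw [setB1, Set.mem_sep_iff, not_and] at hXn1
    have h' := hXn1 hXB
    push_neg at h'
    obtain ⟨Y, hYB, hYX, hY2⟩ := h'
    obtain ⟨a, b, d, hab, hbd, had, hXs, -, -, -⟩ := setB_struct hXB
    have hx3 : X.2.supp.ncard = 3 := by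
      rw [hXs]; exact Set.ncard_eq_three.mpr ⟨a, b, d, hab, had, hbd, rfl⟩
    have hle : (X.2.supp ∩ Y.2.supp).ncard ≤ 3 := by
      calc (X.2.supp ∩ Y.2.supp).ncard ≤ X.2.supp.ncard :=
            Set.ncard_le_ncard Set.inter_subset_left (Set.toFinite _)
        _ = 3 := hx3
    have h2 : (X.2.supp ∩ Y.2.supp).ncard = 2 := by
      rcases Nat.lt_or_ge (X.2.supp ∩ Y.2.supp).ncard 3 with h | h
      · omega
      · exfalso
        obtain ⟨a', b', d', hab', hbd', had', hYs, -, -, -⟩ := setB_struct hYB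
        have hy3 : Y.2.supp.ncard = 3 := by
          rw [hYs]; exact Set.ncard_eq_three.mpr ⟨a', b', d', hab', had', hbd', rfl⟩
        have e1 : X.2.supp ∩ Y.2.supp = X.2.supp :=
          Set.eq_of_subset_of_ncard_le Set.inter_subset_left (by omega) (Set.toFinite _)
        have e2 : X.2.supp ∩ Y.2.supp = Y.2.supp :=
          Set.eq_of_subset_of_ncard_le Set.inter_subset_right (by omega) (Set.toFinite _)
        exact not_supp_eq hXB hYB (Ne.symm hYX) (e1.symm.trans e2)
    have hYB2 : Y ∈ setB2 c := by
      refine ⟨hYB, ?_⟩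
      rw [setB1, Set.mem_sep_iff, not_and]
      intro _
      push_neg
      exact ⟨X, hXB, Ne.symm hYX, by rw [Set.inter_comm]; omega⟩
    refine ⟨Y, ⟨hYB2, hYX, h2⟩, ?_⟩
    rintro Y' ⟨hY'2, hY'X, h2'⟩
    by_contra hne
    exact no_two_partners hn hc hXB hY'2.1 hYB2.1 hY'X hYX hne (by omega) (by omega)
  refine ⟨hpart, ?_⟩
  have hBfin : (setB c).Finite := by
    have himg : ((fun X : Σ i : α, (colorClass c i).ConnectedComponent => X.2.supp) ''
        setB c).Finite := Set.toFinite _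
    refine Set.Finite.of_finite_image himg ?_
    intro X hXB Y hYB h
    by_contra hne
    exact not_supp_eq hXB hYB hne h
  have hB2fin : (setB2 c).Finite := hBfin.subset Set.diff_subset
  haveI := hB2fin.fintype
  let f : Function.End (setB2 c) :=
    fun x => ⟨(hpart x.1 x.2).choose, (hpart x.1 x.2).choose_spec.1.1⟩
  have hfne : ∀ x : (setB2 c), f x ≠ x := by
    intro x h
    have hne := (hpart x.1 x.2).choose_spec.1.2.1
    exact hne (congrArg Subtype.val h)
  have hff : ∀ x : (setB2 c), f (f x) = x := by
    intro x
    obtain ⟨hmem, hne, hcard⟩ := (hpart x.1 x.2).choose_spec.1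
    apply Subtype.ext
    refine ((hpart (f x).1 (f x).2).choose_spec.2 x.1 ⟨x.2, ?_, ?_⟩).symm
    · exact fun h => hne h.symm
    · rw [Set.inter_comm]
      exact hcard
  have hf2 : f ^ 2 ^ 1 = 1 := by
    funext x
    show f (f x) = x
    exact hff x
  have hmod := Equiv.Perm.card_fixedPoints_modEq (p := 2) (n := 1) hf2
  have hfix : Fintype.card (Function.fixedPoints f) = 0 := by
    rw [Fintype.card_eq_zero_iff]
    exact ⟨fun ⟨x, hx⟩ => hfne x hx⟩
  rw [hfix] at hmod
  have hcardeq : (setB2 c).ncard = Fintype.card (setB2 c) := by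
    rw [← Nat.card_coe_set_eq, Nat.card_eq_fintype_card]
  rw [hcardeq]
  rw [even_iff_two_dvd]
  exact (Nat.modEq_zero_iff_dvd).mp hmod
end
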